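/- In a commutative polynomial ring ℤ[x₁, x₂, y₁, y₂] localized at x₁x₂y₁y₂, define the Kronecker cluster algebra with principal coefficients by the exchange recursions x_{m+1} x_{m-1} = x_m² + (monomial coefficient as in the paper specialized at q = 1). Define S_n and F_n by the recursions S₀ = F₀ = 1, S₁ = F₁ = X_δ := x₀x₃ - x₁x₂y₂, S_{n+1} = S_n S₁ - y₁y₂ S_{n-1}, F₂ = F₁² - 2y₁y₂, F_{n+1} = F_n F₁ - y₁y₂ F_{n-1}. Then S_m S_n = ∑_{k=0}^{min(m,n)} (y₁y₂)^k S_{m+n-2k} and F_m S_n = S_{m+n} + (y₁y₂)^m S_{n-m} for n ≥ m ≥ 1. -/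
import Mathlib


/-- q = 1 specialization: in the classical Kronecker cluster algebra with
principal coefficients, the Chebyshev elements S_n and F_n built on
X_δ = x₀x₃ - x₁x₂y₂ satisfy the product formulas
S m S n = ∑_{k=0}^{min(m,n)} (y₁y₂)^k S_{m+n-2k} and
F m S n = S_{m+n} + (y₁y₂)^m S_{n-m} for n ≥ m ≥ 1. -/
theorem classical_kronecker_chebyshev_products
    (R : Type*) [CommRing R] (x₀ x₁ x₂ x₃ y₁ y₂ : R)
    (S F : ℕ → R)
    (hS0 : S 0 = 1) (hS1 : S 1 = x₀ * x₃ - x₁ * x₂ * y₂)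
    (hSrec : ∀ n : ℕ, 1 ≤ n → S (n + 1) = S n * S 1 - y₁ * y₂ * S (n - 1))
    (hF0 : F 0 = 1) (hF1 : F 1 = S 1)
    (hF2 : F 2 = F 1 ^ 2 - 2 * (y₁ * y₂))
    (hFrec : ∀ n : ℕ, 2 ≤ n → F (n + 1) = F n * F 1 - y₁ * y₂ * F (n - 1)) :
    (∀ m n : ℕ, S m * S n =
      ∑ k ∈ Finset.range (min m n + 1), (y₁ * y₂) ^ k * S (m + n - 2 * k)) ∧
    (∀ m n : ℕ, 1 ≤ m → m ≤ n →
      F m * S n = S (m + n) + (y₁ * y₂) ^ m * S (n - m)) := by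
  set y := y₁ * y₂ with hy
  have hmul : ∀ n : ℕ, 1 ≤ n → S 1 * S n = S (n + 1) + y * S (n - 1) := by
    intro n hn
    rw [hSrec n hn]; ring
  have key : ∀ m n : ℕ, m ≤ n →
      S m * S n = ∑ j ∈ Finset.range (m + 1), y ^ j * S (m + n - 2 * j) := by
    intro m
    induction m using Nat.strong_induction_on with
    | _ m ih =>
      intro n hmn
      rcases Nat.lt_or_ge m 2 with hm | hm
      · interval_cases m
        · simp [hS0]
        · rw [hmul n hmn, Finset.sum_range_succ, Finset.sum_range_one]
          have e0 : 1 + n - 2 * 0 = n + 1 := by omega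
          have e1 : 1 + n - 2 * 1 = n - 1 := by omega
          rw [e0, e1]; ring
      · obtain ⟨k, rfl⟩ : ∃ k, m = k + 2 := ⟨m - 2, by omega⟩
        have hn1 : 1 ≤ n := by omega
        have hrec : S (k + 2) = S (k + 1) * S 1 - y * S k := by
          have h := hSrec (k + 1) (by omega)
          have e : k + 1 - 1 = k := by omega
          rw [e] at h
          exact h
        have hm' := hmul n hn1
        have A : S (k + 1) * S (n + 1)
            = ∑ j ∈ Finset.range (k + 2), y ^ j * S (k + 2 + n - 2 * j) := by
          rw [ih (k + 1) (by omega) (n + 1) (by omega)]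
          refine Finset.sum_congr rfl fun j hj => ?_
          have e : k + 1 + (n + 1) - 2 * j = k + 2 + n - 2 * j := by omega
          rw [e]
        have B : S (k + 1) * S (n - 1)
            = (∑ j ∈ Finset.range (k + 1), y ^ j * S (k + n - 2 * j))
              + y ^ (k + 1) * S (n - (k + 2)) := by
          rw [ih (k + 1) (by omega) (n - 1) (by omega), Finset.sum_range_succ]
          congr 1
          · refine Finset.sum_congr rfl fun j hj => ?_
            have e : k + 1 + (n - 1) - 2 * j = k + n - 2 * j := by omega
            rw [e]
          · have e : k + 1 + (n - 1) - 2 * (k + 1) = n - (k + 2) := by omega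
            rw [e]
        have C := ih k (by omega) n (by omega)
        rw [Finset.sum_range_succ]
        have e : k + 2 + n - 2 * (k + 2) = n - (k + 2) := by omega
        rw [e]
        linear_combination S n * hrec + S (k + 1) * hm' + A + y * B - y * C
  have key2 : ∀ m n : ℕ, 1 ≤ m → m ≤ n →
      F m * S n = S (m + n) + y ^ m * S (n - m) := by
    intro m
    induction m using Nat.strong_induction_on with
    | _ m ih =>
      intro n h1 hmn
      rcases Nat.lt_or_ge m 3 with hm | hm
      · interval_cases m
        · rw [hF1, hmul n (by omega)]
          have e : 1 + n = n + 1 := by omega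
          rw [e]; ring
        · rw [hF1] at hF2
          have hm1 := hmul n (by omega)
          have hm2 : S 1 * S (n + 1) = S (n + 2) + y * S n := by
            have h := hmul (n + 1) (by omega)
            have e : n + 1 - 1 = n := by omega
            rw [e] at h
            exact h
          have hm3 : S 1 * S (n - 1) = S n + y * S (n - 2) := by
            have h := hmul (n - 1) (by omega)
            have e1 : n - 1 + 1 = n := by omega
            have e2 : n - 1 - 1 = n - 2 := by omega
            rw [e1, e2] at h
            exact h
          have e : 2 + n = n + 2 := by omega
          rw [e]
          linear_combination S n * hF2 + S 1 * hm1 + hm2 + y * hm3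
      · obtain ⟨k, rfl⟩ : ∃ k, m = k + 3 := ⟨m - 3, by omega⟩
        have hrecF : F (k + 3) = F (k + 2) * S 1 - y * F (k + 1) := by
          have h := hFrec (k + 2) (by omega)
          have e : k + 2 - 1 = k + 1 := by omega
          rw [e, hF1] at h
          exact h
        have hm' := hmul n (by omega)
        have A : F (k + 2) * S (n + 1) = S (k + 3 + n) + y ^ (k + 2) * S (n - (k + 1)) := by
          have h := ih (k + 2) (by omega) (n + 1) (by omega) (by omega)
          have e1 : k + 2 + (n + 1) = k + 3 + n := by omega
          have e2 : n + 1 - (k + 2) = n - (k + 1) := by omega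
          rw [e1, e2] at h
          exact h
        have B : F (k + 2) * S (n - 1) = S (k + 1 + n) + y ^ (k + 2) * S (n - (k + 3)) := by
          have h := ih (k + 2) (by omega) (n - 1) (by omega) (by omega)
          have e1 : k + 2 + (n - 1) = k + 1 + n := by omega
          have e2 : n - 1 - (k + 2) = n - (k + 3) := by omega
          rw [e1, e2] at h
          exact h
        have C : F (k + 1) * S n = S (k + 1 + n) + y ^ (k + 1) * S (n - (k + 1)) :=
          ih (k + 1) (by omega) n (by omega) (by omega)
        linear_combination S n * hrecF + F (k + 2) * hm' + A + y * B - y * C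
  refine ⟨fun m n => ?_, key2⟩
  rcases le_total m n with h | h
  · rw [min_eq_left h]
    exact key m n h
  · rw [min_eq_right h, mul_comm, key n m h]
    refine Finset.sum_congr rfl fun j hj => ?_
    have e : n + m - 2 * j = m + n - 2 * j := by omega
    rw [e]
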